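/- Let n be an odd natural number, n ≥ 3. Then the sum over k from 0 to (n-3)/2 of sin((2k+1)π/(2n))·sin(3(2k+1)π/(2n)) / [sin²((2k+1)π/(2n))·sin²((2k+1)π/n)] equals (n² - 1)/3. -/

import Mathlib

open Real Finset

lemma aux_poly (w : ℂ) (N : ℕ) :
    (1 - w) * ∑ k ∈ range N, (k : ℂ) * w ^ k
      = (∑ k ∈ range N, w ^ k) - 1 - ((N : ℂ) - 1) * w ^ N := by
  induction N with
  | zero => simp
  | succ n ih =>
    rw [sum_range_succ, sum_range_succ, mul_add, ih]
    push_cast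
    ring

lemma aux_inv (w : ℂ) (N : ℕ) (hw : w ^ N = 1) (hw1 : w ≠ 1) :
    (1 - w) * ∑ k ∈ range N, (k : ℂ) * w ^ k = -N := by
  rw [aux_poly, geom_sum_eq hw1, hw]
  ring

lemma sum_k (N : ℕ) : ∑ k ∈ range N, (k : ℂ) = N * (N - 1) / 2 := by
  induction N with
  | zero => simp
  | succ n ih => rw [sum_range_succ, ih]; push_cast; ring

lemma sum_k2 (N : ℕ) : ∑ k ∈ range N, (k : ℂ) ^ 2 = N * (N - 1) * (2 * N - 1) / 6 := by
  induction N with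
  | zero => simp
  | succ n ih => rw [sum_range_succ, ih]; push_cast; ring

lemma core (N : ℕ) (hN : 1 ≤ N) :
    ∑ j ∈ range N, ((Real.sin (j * π / N)) ^ 2)⁻¹ = ((N : ℝ) ^ 2 - 1) / 3 := by
  have hN0 : (N : ℝ) ≠ 0 := by positivity
  set ζ : ℂ := Complex.exp (2 * π * Complex.I / N) with hζdef
  have hprim : IsPrimitiveRoot ζ N := Complex.isPrimitiveRoot_exp N (by omega)
  have hζN : ζ ^ N = 1 := hprim.pow_eq_one
  have hζ0 : ζ ≠ 0 := Complex.exp_ne_zero _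
  set ξ : ℂ := ζ ^ (N - 1) with hξdef
  have hζξ : ζ * ξ = 1 := by
    rw [hξdef, ← pow_succ']
    rw [show N - 1 + 1 = N by omega]
    exact hζN
  have hξN : ξ ^ N = 1 := by rw [hξdef, ← pow_mul, mul_comm, pow_mul, hζN, one_pow]
  set P : ℕ → ℂ := fun j => ∑ k ∈ range N, (k : ℂ) * (ζ ^ j) ^ k with hP
  set Q : ℕ → ℂ := fun j => ∑ k ∈ range N, (k : ℂ) * (ξ ^ j) ^ k with hQ
  -- inverse relation for each power
  have hinvj : ∀ j : ℕ, (ζ ^ j) * (ξ ^ j) = 1 := by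
    intro j; rw [← mul_pow, hζξ, one_pow]
  -- the double sum
  have swap : ∑ j ∈ range N, P j * Q j = N * ∑ k ∈ range N, (k : ℂ) ^ 2 := by
    have expand : ∀ j, P j * Q j
        = ∑ k ∈ range N, ∑ l ∈ range N, ((k : ℂ) * l) * (ζ ^ k * ξ ^ l) ^ j := by
      intro j
      rw [hP, hQ, Finset.sum_mul_sum]
      refine Finset.sum_congr rfl fun k _ => Finset.sum_congr rfl fun l _ => ?_
      rw [← pow_mul, ← pow_mul, mul_comm j k, mul_comm j l, pow_mul, pow_mul]
      ring
    calc ∑ j ∈ range N, P j * Q j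
        = ∑ k ∈ range N, ∑ l ∈ range N, ((k : ℂ) * l) *
            ∑ j ∈ range N, (ζ ^ k * ξ ^ l) ^ j := by
          rw [Finset.sum_congr rfl fun j _ => expand j, Finset.sum_comm]
          refine Finset.sum_congr rfl fun k _ => ?_
          rw [Finset.sum_comm]
          refine Finset.sum_congr rfl fun l _ => ?_
          rw [Finset.mul_sum]
      _ = ∑ k ∈ range N, ∑ l ∈ range N, (if l = k then ((k:ℂ) * l) * N else 0) := by
          refine Finset.sum_congr rfl fun k hk => Finset.sum_congr rfl fun l hl => ?_
          simp only [Finset.mem_range] at hk hl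
          by_cases h : l = k
          · subst h
            rw [if_pos rfl, hinvj l]
            simp
          · rw [if_neg h]
            have hw1 : ζ ^ k * ξ ^ l ≠ 1 := by
              intro hcon
              have hl1 : ζ ^ l * ξ ^ l = 1 := hinvj l
              have hξl0 : ξ ^ l ≠ 0 := pow_ne_zero _ (by
                intro h0
                rw [hξdef] at h0
                exact hζ0 (pow_eq_zero_iff (by omega) |>.mp h0))
              have : ζ ^ k = ζ ^ l := mul_right_cancel₀ hξl0 (hcon.trans hl1.symm)
              exact h (hprim.pow_inj hl hk this.symm)
            have hwN : (ζ ^ k * ξ ^ l) ^ N = 1 := by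
              rw [mul_pow, ← pow_mul, mul_comm k N, pow_mul, hζN, one_pow, one_mul,
                ← pow_mul, mul_comm l N, pow_mul, hξN, one_pow]
            rw [geom_sum_eq hw1, hwN, sub_self, zero_div, mul_zero]
      _ = ∑ k ∈ range N, ((k:ℂ) * k) * N := by
          refine Finset.sum_congr rfl fun k hk => ?_
          rw [Finset.sum_ite_eq' (range N) k (fun l => ((k:ℂ) * l) * N), if_pos hk]
      _ = N * ∑ k ∈ range N, (k : ℂ) ^ 2 := by
          rw [Finset.mul_sum]; exact Finset.sum_congr rfl fun k _ => by ring
  -- per-j identity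
  have hNC : (N:ℂ) ≠ 0 := Nat.cast_ne_zero.mpr (by omega)
  have key : ∀ j ∈ Finset.Ico 1 N,
      ((((Real.sin (j * π / N)) ^ 2)⁻¹ : ℝ) : ℂ) * (N:ℂ)^2 = 4 * (P j * Q j) := by
    intro j hj
    simp only [Finset.mem_Ico] at hj
    obtain ⟨hj1, hj2⟩ := hj
    have hζj1 : ζ ^ j ≠ 1 := hprim.pow_ne_one_of_pos_of_lt (by omega) hj2
    have hξj1 : ξ ^ j ≠ 1 := by
      intro h
      apply hζj1
      have := hinvj j
      rw [h, mul_one] at this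
      exact this
    have hζjN : (ζ ^ j) ^ N = 1 := by
      rw [← pow_mul, mul_comm j N, pow_mul, hζN, one_pow]
    have hξjN : (ξ ^ j) ^ N = 1 := by
      rw [← pow_mul, mul_comm j N, pow_mul, hξN, one_pow]
    have hPj : (1 - ζ ^ j) * P j = -N := aux_inv (ζ ^ j) N hζjN hζj1
    have hQj : (1 - ξ ^ j) * Q j = -N := aux_inv (ξ ^ j) N hξjN hξj1
    set x : ℝ := 2 * π * j / N with hxdef
    have hexpζ : ζ ^ j = Complex.exp ((x : ℂ) * Complex.I) := by
      rw [hζdef, ← Complex.exp_nat_mul]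
      congr 1
      rw [hxdef]
      push_cast
      ring
    have hexpξ : ξ ^ j = Complex.exp (((-x : ℝ) : ℂ) * Complex.I) := by
      have h1 : ξ ^ j = (ζ ^ j)⁻¹ := eq_inv_of_mul_eq_one_right (hinvj j)
      rw [h1, hexpζ, ← Complex.exp_neg]
      congr 1
      push_cast
      ring
    have hreal : (4 * Real.sin (j * π / N) ^ 2 : ℝ) = 2 - 2 * Real.cos x := by
      have hx2 : x = 2 * (j * π / N) := by rw [hxdef]; ring
      rw [hx2, Real.cos_two_mul]
      nlinarith [Real.sin_sq_add_cos_sq (j * π / N)]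
    have hprod : (1 - ζ ^ j) * (1 - ξ ^ j)
        = ((4 * Real.sin (j * π / N) ^ 2 : ℝ) : ℂ) := by
      rw [hexpζ, hexpξ, hreal, Complex.exp_mul_I, Complex.exp_mul_I]
      push_cast
      rw [Complex.cos_neg, Complex.sin_neg]
      linear_combination Complex.sin_sq_add_cos_sq (x : ℂ) - Complex.sin (x : ℂ) ^ 2 * Complex.I_sq
    have h4 : ((1 - ζ ^ j) * (1 - ξ ^ j)) * (P j * Q j) = (N : ℂ)^2 := by
      rw [show ((1 - ζ ^ j) * (1 - ξ ^ j)) * (P j * Q j)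
        = ((1 - ζ ^ j) * P j) * ((1 - ξ ^ j) * Q j) from by ring, hPj, hQj]
      ring
    rw [hprod] at h4
    have hs : Real.sin (j * π / N) ≠ 0 := by
      have h0 : 0 < (j : ℝ) * π / N := by
        apply div_pos (mul_pos _ Real.pi_pos)
        · exact_mod_cast Nat.cast_pos.mpr (by omega)
        · exact_mod_cast Nat.cast_pos.mpr (by omega)
      have h1 : (j : ℝ) * π / N < π := by
        rw [div_lt_iff₀ (by positivity)]
        have : (j : ℝ) < N := by exact_mod_cast hj2
        nlinarith [Real.pi_pos]
      exact ne_of_gt (Real.sin_pos_of_pos_of_lt_pi h0 h1)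
    set s : ℝ := Real.sin (j * π / N) with hsdef
    have hs2 : (s : ℂ) ≠ 0 := by exact_mod_cast hs
    push_cast at h4 ⊢
    rw [inv_mul_eq_div, div_eq_iff (pow_ne_zero 2 hs2)]
    linear_combination -h4
  -- assemble
  have split : ∀ (f : ℕ → ℂ), ∑ j ∈ range N, f j = f 0 + ∑ j ∈ Finset.Ico 1 N, f j := by
    intro f
    rw [Finset.range_eq_Ico, Finset.sum_eq_sum_Ico_succ_bot (by omega : 0 < N)]
  have hP0 : P 0 = ∑ k ∈ range N, (k:ℂ) := by simp [hP]
  have hQ0 : Q 0 = ∑ k ∈ range N, (k:ℂ) := by simp [hQ]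
  have hPQIco : ∑ j ∈ Finset.Ico 1 N, P j * Q j
      = (N:ℂ) * ((N:ℂ) * ((N:ℂ) - 1) * (2 * (N:ℂ) - 1) / 6)
        - ((N:ℂ) * ((N:ℂ) - 1) / 2)^2 := by
    have h1 := split (fun j => P j * Q j)
    rw [swap, hP0, hQ0, sum_k, sum_k2] at h1
    linear_combination -h1
  have hsum : (∑ j ∈ Finset.Ico 1 N, ((((Real.sin (j * π / N)) ^ 2)⁻¹ : ℝ) : ℂ)) * (N:ℂ)^2
      = 4 * ∑ j ∈ Finset.Ico 1 N, P j * Q j := by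
    rw [Finset.sum_mul, Finset.mul_sum]
    exact Finset.sum_congr rfl key
  have hfinal : (∑ j ∈ Finset.Ico 1 N, ((((Real.sin (j * π / N)) ^ 2)⁻¹ : ℝ) : ℂ)) * (N:ℂ)^2
      = ((((N:ℝ)^2 - 1) / 3 : ℝ) : ℂ) * (N:ℂ)^2 := by
    rw [hsum, hPQIco]
    push_cast
    field_simp
    ring
  have hC := mul_right_cancel₀ (pow_ne_zero 2 hNC) hfinal
  have hreal : ∑ j ∈ range N, ((Real.sin (j * π / N)) ^ 2)⁻¹
      = ∑ j ∈ Finset.Ico 1 N, ((Real.sin (j * π / N)) ^ 2)⁻¹ := by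
    rw [Finset.range_eq_Ico, Finset.sum_eq_sum_Ico_succ_bot (by omega : 0 < N)]
    norm_num
  rw [hreal]
  have hcast : ((∑ j ∈ Finset.Ico 1 N, ((Real.sin (j * π / N)) ^ 2)⁻¹ : ℝ) : ℂ)
      = ((((N:ℝ)^2 - 1) / 3 : ℝ) : ℂ) := by
    rw [Complex.ofReal_sum]
    exact hC
  exact_mod_cast hcast

lemma sum_even_odd {M : Type*} [AddCommMonoid M] (f : ℕ → M) (n : ℕ) :
    ∑ j ∈ range (2 * n), f j
      = (∑ k ∈ range n, f (2 * k)) + ∑ k ∈ range n, f (2 * k + 1) := by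
  induction n with
  | zero => simp
  | succ m ih =>
    rw [show 2 * (m + 1) = 2 * m + 1 + 1 by ring, sum_range_succ, sum_range_succ,
      ih, sum_range_succ, sum_range_succ]
    abel

lemma lemB (n : ℕ) (hn : 1 ≤ n) :
    ∑ k ∈ range n, ((Real.sin ((2 * (k:ℝ) + 1) * π / (2 * (n:ℝ)))) ^ 2)⁻¹ = (n:ℝ) ^ 2 := by
  have hn0 : (n:ℝ) ≠ 0 := Nat.cast_ne_zero.mpr (by omega)
  have c2 := core (2 * n) (by omega)
  have c1 := core n hn
  rw [sum_even_odd (fun (j : ℕ) => ((Real.sin ((j:ℝ) * π / ((2 * n : ℕ) : ℝ))) ^ 2)⁻¹) n] at c2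
  have heven : ∑ k ∈ range n, ((Real.sin (((2 * k : ℕ) : ℝ) * π / ((2 * n : ℕ) : ℝ))) ^ 2)⁻¹
      = ∑ j ∈ range n, ((Real.sin ((j:ℝ) * π / (n:ℝ))) ^ 2)⁻¹ := by
    refine Finset.sum_congr rfl fun k _ => ?_
    have h : ((2 * k : ℕ) : ℝ) * π / ((2 * n : ℕ) : ℝ) = (k:ℝ) * π / (n:ℝ) := by
      push_cast; field_simp
    rw [h]
  have hodd : ∑ k ∈ range n, ((Real.sin (((2 * k + 1 : ℕ) : ℝ) * π / ((2 * n : ℕ) : ℝ))) ^ 2)⁻¹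
      = ∑ k ∈ range n, ((Real.sin ((2 * (k:ℝ) + 1) * π / (2 * (n:ℝ)))) ^ 2)⁻¹ := by
    refine Finset.sum_congr rfl fun k _ => ?_
    have h : ((2 * k + 1 : ℕ) : ℝ) * π / ((2 * n : ℕ) : ℝ)
        = (2 * (k:ℝ) + 1) * π / (2 * (n:ℝ)) := by push_cast; ring
    rw [h]
  rw [heven, hodd, c1] at c2
  have h2n : ((2 * n : ℕ) : ℝ) = 2 * (n:ℝ) := by push_cast; ring
  rw [h2n] at c2
  nlinarith [c2]

lemma lemC (m : ℕ) (hm : 1 ≤ m) :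
    ∑ k ∈ range m, ((Real.sin ((2 * (k:ℝ) + 1) * π / (2 * ((2 * m + 1 : ℕ) : ℝ)))) ^ 2)⁻¹
      = (((2 * m + 1 : ℕ) : ℝ) ^ 2 - 1) / 2 := by
  set g : ℕ → ℝ :=
    fun k => ((Real.sin ((2 * (k:ℝ) + 1) * π / (2 * ((2 * m + 1 : ℕ) : ℝ)))) ^ 2)⁻¹ with hg
  have B : ∑ k ∈ range (2 * m + 1), g k = ((2 * m + 1 : ℕ) : ℝ) ^ 2 := lemB (2 * m + 1) (by omega)
  have hsplit : ∀ f : ℕ → ℝ, ∑ k ∈ range (2 * m + 1), f k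
      = ∑ k ∈ range (m + 1), f k + ∑ i ∈ range m, f (m + 1 + i) := by
    intro f
    rw [show 2 * m + 1 = m + 1 + m by omega]
    exact Finset.sum_range_add f (m + 1) m
  have hmid : g m = 1 := by
    rw [hg]
    simp only []
    have h : (2 * (m:ℝ) + 1) * π / (2 * ((2 * m + 1 : ℕ) : ℝ)) = π / 2 := by
      push_cast; field_simp
    rw [h, Real.sin_pi_div_two]
    norm_num
  have hrefl : ∑ i ∈ range m, g (m + 1 + i) = ∑ k ∈ range m, g k := by
    have step : ∀ i ∈ range m, g (m + 1 + i) = g (m - 1 - i) := by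
      intro i hi
      simp only [Finset.mem_range] at hi
      rw [hg]
      simp only []
      have h1 : ((m - 1 - i : ℕ) : ℝ) = (m:ℝ) - 1 - (i:ℝ) := by
        rw [Nat.cast_sub (by omega : i ≤ m - 1), Nat.cast_sub (by omega : 1 ≤ m)]
        norm_num
      have hangle : (2 * ((m + 1 + i : ℕ) : ℝ) + 1) * π / (2 * ((2 * m + 1 : ℕ) : ℝ))
          = π - (2 * ((m - 1 - i : ℕ) : ℝ) + 1) * π / (2 * ((2 * m + 1 : ℕ) : ℝ)) := by
        rw [h1]
        push_cast
        field_simp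
        ring
      rw [hangle, Real.sin_pi_sub]
    rw [Finset.sum_congr rfl step]
    exact Finset.sum_range_reflect g m
  rw [hsplit g, sum_range_succ, hmid, hrefl] at B
  linarith [B]

lemma lemD (m : ℕ) (hm : 1 ≤ m) :
    ∑ k ∈ range m, ((Real.sin ((2 * (k:ℝ) + 1) * π / ((2 * m + 1 : ℕ) : ℝ))) ^ 2)⁻¹
      = (((2 * m + 1 : ℕ) : ℝ) ^ 2 - 1) / 6 := by
  set f : ℕ → ℝ := fun j => ((Real.sin ((j:ℝ) * π / ((2 * m + 1 : ℕ) : ℝ))) ^ 2)⁻¹ with hf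
  have S : ∑ j ∈ range (2 * m + 1), f j = (((2 * m + 1 : ℕ) : ℝ) ^ 2 - 1) / 3 :=
    core (2 * m + 1) (by omega)
  rw [Finset.sum_range_succ' f (2 * m)] at S
  have hf0 : f 0 = 0 := by simp [hf]
  rw [hf0, add_zero, sum_even_odd (fun i => f (i + 1)) m] at S
  have heq : ∀ k ∈ range m, f (2 * k + 1 + 1) = f (2 * (m - 1 - k) + 1) := by
    intro k hk
    simp only [Finset.mem_range] at hk
    rw [hf]
    simp only []
    have h1 : ((m - 1 - k : ℕ) : ℝ) = (m:ℝ) - 1 - (k:ℝ) := by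
      rw [Nat.cast_sub (by omega : k ≤ m - 1), Nat.cast_sub (by omega : 1 ≤ m)]
      norm_num
    have hangle : ((2 * k + 1 + 1 : ℕ) : ℝ) * π / ((2 * m + 1 : ℕ) : ℝ)
        = π - ((2 * (m - 1 - k) + 1 : ℕ) : ℝ) * π / ((2 * m + 1 : ℕ) : ℝ) := by
      push_cast [h1]
      field_simp
      ring
    rw [hangle, Real.sin_pi_sub]
  rw [Finset.sum_congr rfl heq, Finset.sum_range_reflect (fun t => f (2 * t + 1)) m] at S
  have hfin : ∑ k ∈ range m, ((Real.sin ((2 * (k:ℝ) + 1) * π / ((2 * m + 1 : ℕ) : ℝ))) ^ 2)⁻¹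
      = ∑ k ∈ range m, f (2 * k + 1) := by
    refine Finset.sum_congr rfl fun k _ => ?_
    rw [hf]
    simp only []
    have h : ((2 * k + 1 : ℕ) : ℝ) = 2 * (k:ℝ) + 1 := by push_cast; ring
    rw [h]
  rw [hfin]
  linarith [S]

lemma term_eq (n k : ℕ) (h3 : 3 ≤ n) (hk : 2 * k + 1 < n) :
    (Real.sin ((2 * (k:ℝ) + 1) * π / (2 * (n:ℝ))) *
        Real.sin (3 * (2 * (k:ℝ) + 1) * π / (2 * (n:ℝ)))) /
      (Real.sin ((2 * (k:ℝ) + 1) * π / (2 * (n:ℝ))) ^ 2 *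
        Real.sin ((2 * (k:ℝ) + 1) * π / (n:ℝ)) ^ 2)
    = ((Real.sin ((2 * (k:ℝ) + 1) * π / (2 * (n:ℝ)))) ^ 2)⁻¹
      - ((Real.sin ((2 * (k:ℝ) + 1) * π / (n:ℝ))) ^ 2)⁻¹ := by
  have hn0 : (0:ℝ) < n := by positivity
  set θ : ℝ := (2 * (k:ℝ) + 1) * π / (2 * (n:ℝ)) with hθ
  have hθpos : 0 < θ := by
    rw [hθ]; positivity
  have hθlt : θ < π / 2 := by
    rw [hθ, div_lt_div_iff₀ (by positivity) (by norm_num)]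
    have : (2 * (k:ℝ) + 1) < n := by exact_mod_cast hk
    nlinarith [Real.pi_pos]
  have h2θ : (2 * (k:ℝ) + 1) * π / (n:ℝ) = 2 * θ := by
    rw [hθ]; field_simp
  have h3θ : 3 * (2 * (k:ℝ) + 1) * π / (2 * (n:ℝ)) = 3 * θ := by
    rw [hθ]; ring
  have hs : 0 < Real.sin θ := Real.sin_pos_of_pos_of_lt_pi hθpos (by linarith [Real.pi_pos])
  have hc : 0 < Real.cos θ := Real.cos_pos_of_mem_Ioo ⟨by linarith, hθlt⟩
  rw [h2θ, h3θ, Real.sin_two_mul, Real.sin_three_mul]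
  have hs' : Real.sin θ ≠ 0 := ne_of_gt hs
  have hc' : Real.cos θ ≠ 0 := ne_of_gt hc
  field_simp
  nlinarith [Real.sin_sq_add_cos_sq θ, sq_nonneg (Real.sin θ), sq_nonneg (Real.cos θ)]

theorem stmt_2 (n : ℕ) (hn : Odd n) (h3 : 3 ≤ n) :
    ∑ k ∈ Finset.range ((n - 1) / 2),
      (Real.sin ((2 * k + 1) * π / (2 * n)) *
        Real.sin (3 * (2 * k + 1) * π / (2 * n))) /
        (Real.sin ((2 * k + 1) * π / (2 * n)) ^ 2 *
          Real.sin ((2 * k + 1) * π / n) ^ 2)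
      = ((n : ℝ) ^ 2 - 1) / 3 := by
  obtain ⟨m, hm⟩ : ∃ m, n = 2 * m + 1 := by
    obtain ⟨t, ht⟩ := hn; exact ⟨t, by omega⟩
  subst hm
  have hm1 : 1 ≤ m := by omega
  have hrange : (2 * m + 1 - 1) / 2 = m := by omega
  rw [hrange]
  have hterm : ∀ k ∈ range m,
      (Real.sin ((2 * (k:ℝ) + 1) * π / (2 * ((2 * m + 1 : ℕ) : ℝ))) *
        Real.sin (3 * (2 * (k:ℝ) + 1) * π / (2 * ((2 * m + 1 : ℕ) : ℝ)))) /
        (Real.sin ((2 * (k:ℝ) + 1) * π / (2 * ((2 * m + 1 : ℕ) : ℝ))) ^ 2 *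
          Real.sin ((2 * (k:ℝ) + 1) * π / ((2 * m + 1 : ℕ) : ℝ)) ^ 2)
      = ((Real.sin ((2 * (k:ℝ) + 1) * π / (2 * ((2 * m + 1 : ℕ) : ℝ)))) ^ 2)⁻¹
        - ((Real.sin ((2 * (k:ℝ) + 1) * π / ((2 * m + 1 : ℕ) : ℝ))) ^ 2)⁻¹ := by
    intro k hk
    simp only [Finset.mem_range] at hk
    exact term_eq (2 * m + 1) k h3 (by omega)
  rw [Finset.sum_congr rfl hterm, Finset.sum_sub_distrib, lemC m hm1, lemD m hm1]
  push_cast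
  ring
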